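/- Let σ(z) = tanh(z/√2) and let Q : [−1,1] → ℝ be odd, continuously differentiable, with Q(1) = 1. Assume z ↦ z·(1 − Q(σ(z))) is integrable on (0,∞). Then the geometric moment 𝓜₁[Q] := ∫_{−∞}^{∞} z·(1 + Q(σ(z)) − 2·𝟙_{(0,∞)}(z)) dz satisfies 𝓜₁[Q] = −2·∫₀¹ Q'(u)·(arctanh u)² du. -/

import Mathlib

open MeasureTheory intervalIntegral

/-- The heteroclinic profile `σ(z) = tanh(z/√2)`. -/
noncomputable def sigma (z : ℝ) : ℝ := Real.tanh (z / Real.sqrt 2)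

/-- The inverse hyperbolic tangent on `(−1,1)`. -/
noncomputable def arctanh (x : ℝ) : ℝ := (1 / 2) * Real.log ((1 + x) / (1 - x))

lemma tanh_eq_exp (x : ℝ) :
    Real.tanh x = (Real.exp (2*x) - 1) / (Real.exp (2*x) + 1) := by
  have h1 : Real.exp x ≠ 0 := (Real.exp_pos x).ne'
  have h2 : Real.exp (2*x) = Real.exp x * Real.exp x := by rw [two_mul, Real.exp_add]
  have h3 : Real.exp (-x) = (Real.exp x)⁻¹ := Real.exp_neg x
  have hc : Real.exp x + Real.exp (-x) ≠ 0 := by positivity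
  have hc2 : Real.exp (2*x) + 1 ≠ 0 := by positivity
  rw [Real.tanh_eq_sinh_div_cosh, Real.sinh_eq, Real.cosh_eq, h2, h3]
  field_simp

lemma tanh_mem_Ioo (x : ℝ) : Real.tanh x ∈ Set.Ioo (-1 : ℝ) 1 := by
  rw [tanh_eq_exp]
  have h : (0:ℝ) < Real.exp (2*x) := Real.exp_pos _
  constructor
  · rw [lt_div_iff₀ (by linarith)]; linarith
  · rw [div_lt_one (by linarith)]; linarith

lemma one_sub_tanh (x : ℝ) : 1 - Real.tanh x = 2 / (Real.exp (2*x) + 1) := by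
  have h : (0:ℝ) < Real.exp (2*x) := Real.exp_pos _
  rw [tanh_eq_exp]; field_simp; ring

lemma one_add_tanh (x : ℝ) : 1 + Real.tanh x = 2 * Real.exp (2*x) / (Real.exp (2*x) + 1) := by
  have h : (0:ℝ) < Real.exp (2*x) := Real.exp_pos _
  rw [tanh_eq_exp]; field_simp; ring

lemma one_sub_tanh_le (x : ℝ) : 1 - Real.tanh x ≤ 2 * Real.exp (-(2*x)) := by
  have h : (0:ℝ) < Real.exp (2*x) := Real.exp_pos _
  rw [one_sub_tanh, Real.exp_neg, div_le_iff₀ (by linarith)]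
  rw [mul_comm (2 * (Real.exp (2*x))⁻¹)]
  have : (2:ℝ) * (Real.exp (2*x))⁻¹ * Real.exp (2*x) = 2 := by field_simp
  nlinarith [inv_pos.2 h]

lemma arctanh_tanh (x : ℝ) : arctanh (Real.tanh x) = x := by
  have h : (0:ℝ) < Real.exp (2*x) := Real.exp_pos _
  have key : (1 + Real.tanh x) / (1 - Real.tanh x) = Real.exp (2*x) := by
    rw [one_sub_tanh, one_add_tanh]
    field_simp
  rw [arctanh, key, Real.log_exp]; ring

lemma tanh_arctanh {y : ℝ} (hy : y ∈ Set.Ioo (-1:ℝ) 1) : Real.tanh (arctanh y) = y := by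
  have h1 : (0:ℝ) < 1 + y := by linarith [hy.1]
  have h2 : (0:ℝ) < 1 - y := by linarith [hy.2]
  have hr : (0:ℝ) < (1 + y) / (1 - y) := by positivity
  have he : Real.exp (2 * arctanh y) = (1 + y) / (1 - y) := by
    rw [arctanh]
    rw [show (2:ℝ) * (1/2 * Real.log ((1+y)/(1-y))) = Real.log ((1+y)/(1-y)) by ring]
    exact Real.exp_log hr
  rw [tanh_eq_exp, he]
  rw [div_eq_iff (by positivity)]
  field_simp
  ring

lemma hasDerivAt_tanh (x : ℝ) : HasDerivAt Real.tanh (1 - Real.tanh x ^ 2) x := by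
  have hc : Real.cosh x ≠ 0 := (Real.cosh_pos x).ne'
  have h := (Real.hasDerivAt_sinh x).div (Real.hasDerivAt_cosh x) hc
  have heq : (Real.cosh x * Real.cosh x - Real.sinh x * Real.sinh x) / Real.cosh x ^ 2
      = 1 - Real.tanh x ^ 2 := by
    rw [Real.tanh_eq_sinh_div_cosh, div_pow]
    have h2 : Real.cosh x ^ 2 - Real.sinh x ^ 2 = 1 := Real.cosh_sq_sub_sinh_sq x
    field_simp
  rw [heq] at h
  exact h.congr_of_eventuallyEq
    (Filter.Eventually.of_forall fun y => Real.tanh_eq_sinh_div_cosh y)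

lemma tanh_strictMono : StrictMono Real.tanh := by
  apply strictMono_of_deriv_pos
  intro x
  rw [(hasDerivAt_tanh x).deriv]
  have h := tanh_mem_Ioo x
  nlinarith [h.1, h.2]

lemma sqrt2_pos : (0:ℝ) < Real.sqrt 2 := Real.sqrt_pos.2 (by norm_num)

lemma hasDerivAt_sigma (z : ℝ) :
    HasDerivAt sigma ((1 - sigma z ^ 2) / Real.sqrt 2) z := by
  have h1 : HasDerivAt (fun z : ℝ => z / Real.sqrt 2) (1 / Real.sqrt 2) z := by
    simpa using (hasDerivAt_id z).div_const (Real.sqrt 2)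
  have h := (hasDerivAt_tanh (z / Real.sqrt 2)).comp z h1
  have e : sigma = Real.tanh ∘ fun z => z / Real.sqrt 2 := rfl
  rw [e]
  exact h.congr_deriv (by simp only [Function.comp_apply]; ring)

lemma sigma_mem_Ioo (z : ℝ) : sigma z ∈ Set.Ioo (-1:ℝ) 1 := tanh_mem_Ioo _

lemma sigma_zero : sigma 0 = 0 := by
  simp [sigma, Real.tanh_eq_sinh_div_cosh]

lemma sigma_strictMono : StrictMono sigma := by
  intro a b hab
  exact tanh_strictMono ((div_lt_div_iff_of_pos_right sqrt2_pos).2 hab)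

lemma arctanh_sigma (z : ℝ) : arctanh (sigma z) = z / Real.sqrt 2 :=
  arctanh_tanh _

lemma sigma_neg (z : ℝ) : sigma (-z) = - sigma z := by
  rw [sigma, sigma, neg_div, Real.tanh_neg]

lemma one_sub_sigma_le {z : ℝ} :
    1 - sigma z ≤ 2 * Real.exp (-(Real.sqrt 2 * z)) := by
  have h := one_sub_tanh_le (z / Real.sqrt 2)
  have h2 : 2 * (z / Real.sqrt 2) = Real.sqrt 2 * z := by
    have hs : Real.sqrt 2 * Real.sqrt 2 = 2 := Real.mul_self_sqrt (by norm_num)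
    field_simp
    linear_combination (-z) * hs
  rw [sigma]
  rw [h2] at h
  exact h

lemma arctanh_pos_continuousOn : ContinuousOn arctanh (Set.Ioo (-1:ℝ) 1) := by
  intro x hx
  have h1 : (0:ℝ) < 1 + x := by linarith [hx.1]
  have h2 : (0:ℝ) < 1 - x := by linarith [hx.2]
  apply ContinuousAt.continuousWithinAt
  apply ContinuousAt.mul continuousAt_const
  apply (Real.continuousAt_log (by positivity)).comp
  exact ((continuousAt_const.add continuousAt_id).div
    (continuousAt_const.sub continuousAt_id) h2.ne')

lemma sigma_continuous : Continuous sigma := by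
  have : Continuous Real.tanh := by
    rw [show Real.tanh = fun x => Real.sinh x / Real.cosh x from funext Real.tanh_eq_sinh_div_cosh]
    exact Real.continuous_sinh.div Real.continuous_cosh fun x => (Real.cosh_pos x).ne'
  exact this.comp (continuous_id.div_const _)

lemma sigma_image_Ioi : sigma '' Set.Ioi 0 = Set.Ioo (0:ℝ) 1 := by
  apply Set.Subset.antisymm
  · rintro y ⟨z, hz, rfl⟩
    exact ⟨by simpa [sigma_zero] using sigma_strictMono hz, (sigma_mem_Ioo z).2⟩
  · rintro y ⟨hy0, hy1⟩
    refine ⟨Real.sqrt 2 * arctanh y, ?_, ?_⟩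
    · have h1 : (1:ℝ) < (1 + y) / (1 - y) := by
        rw [lt_div_iff₀ (by linarith)]; linarith
      have : 0 < arctanh y := by
        rw [arctanh]
        have := Real.log_pos h1
        positivity
      exact mul_pos sqrt2_pos this
    · rw [sigma, mul_div_cancel_left₀ _ sqrt2_pos.ne']
      exact tanh_arctanh ⟨by linarith, hy1⟩

open Filter Topology

/-- Single-integral formula for the geometric moment: for `Q` odd, `C¹` on `[−1,1]`
with `Q(1) = 1`, assuming `z ↦ z(1 − Q(σ(z)))` is integrable on `(0,∞)`,
`𝓜₁[Q] = ∫ z(1 + Q(σ(z)) − 2·𝟙_{(0,∞)}(z)) dz = −2∫₀¹ Q'(u)·arctanh(u)² du`. -/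
theorem geometric_moment_formula
    (Q : ℝ → ℝ) (hodd : ∀ u : ℝ, Q (-u) = -Q u)
    (hQ : ContDiffOn ℝ 1 Q (Set.Icc (-1) 1)) (hQ1 : Q 1 = 1)
    (hint : IntegrableOn (fun z : ℝ => z * (1 - Q (sigma z))) (Set.Ioi 0)) :
    (∫ z : ℝ, z * (1 + Q (sigma z) - 2 * Set.indicator (Set.Ioi (0:ℝ)) (fun _ => (1:ℝ)) z))
      = -2 * ∫ u in (0:ℝ)..1, deriv Q u * (arctanh u) ^ 2 := by
  -- notation
  set G : ℝ → ℝ := fun u => deriv Q u * (arctanh u) ^ 2 with hG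
  set g : ℝ → ℝ := fun z => z * (1 - Q (sigma z)) with hg
  set f : ℝ → ℝ := fun z =>
    z * (1 + Q (sigma z) - 2 * Set.indicator (Set.Ioi (0:ℝ)) (fun _ => (1:ℝ)) z) with hf
  -- basic facts about Q
  have hQdiff : DifferentiableOn ℝ Q (Set.Icc (-1) 1) := hQ.differentiableOn one_ne_zero
  have hQd : ContinuousOn (derivWithin Q (Set.Icc (-1) 1)) (Set.Icc (-1) 1) :=
    hQ.continuousOn_derivWithin (uniqueDiffOn_Icc (by norm_num)) le_rfl
  obtain ⟨M, hM⟩ := (isCompact_Icc).exists_bound_of_continuousOn hQd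
  have hM0 : 0 ≤ M := le_trans (norm_nonneg _) (hM 0 (by norm_num))
  have hQdd : ∀ u ∈ Set.Ioo (-1:ℝ) 1, deriv Q u = derivWithin Q (Set.Icc (-1) 1) u :=
    fun u hu => (derivWithin_of_mem_nhds (Icc_mem_nhds hu.1 hu.2)).symm
  have hMQ : ∀ u ∈ Set.Ioo (-1:ℝ) 1, |deriv Q u| ≤ M := fun u hu => by
    rw [hQdd u hu]
    exact hM u (Set.Ioo_subset_Icc_self hu)
  have hQ'cont : ContinuousOn (deriv Q) (Set.Ioo (-1:ℝ) 1) :=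
    (hQd.mono Set.Ioo_subset_Icc_self).congr hQdd
  have hQat : ∀ u ∈ Set.Ioo (-1:ℝ) 1, HasDerivAt Q (deriv Q u) u := fun u hu =>
    ((hQ.contDiffAt (Icc_mem_nhds hu.1 hu.2)).differentiableAt one_ne_zero).hasDerivAt
  have hLip : ∀ y ∈ Set.Icc (-1:ℝ) 1, |Q 1 - Q y| ≤ M * |1 - y| := by
    intro y hy
    have := Convex.norm_image_sub_le_of_norm_derivWithin_le hQdiff hM (convex_Icc _ _) hy
      (by norm_num : (1:ℝ) ∈ Set.Icc (-1:ℝ) 1)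
    simpa [Real.norm_eq_abs] using this
  -- continuity composites
  have hQσ : Continuous fun z => Q (sigma z) :=
    hQ.continuousOn.comp_continuous sigma_continuous fun z =>
      Set.Ioo_subset_Icc_self (sigma_mem_Ioo z)
  have hQ'σ : Continuous fun z => deriv Q (sigma z) :=
    hQ'cont.comp_continuous sigma_continuous fun z => sigma_mem_Ioo z
  have hσ'cont : Continuous fun x : ℝ => (1 - sigma x ^ 2) / Real.sqrt 2 :=
    (continuous_const.sub ((sigma_continuous.pow 2))).div_const _
  have hGcont : ContinuousOn G (Set.Ioo (-1:ℝ) 1) :=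
    hQ'cont.mul (arctanh_pos_continuousOn.pow 2)
  have harc2 : ∀ x : ℝ, arctanh (sigma x) ^ 2 = x ^ 2 / 2 := by
    intro x
    rw [arctanh_sigma, div_pow, Real.sq_sqrt (by norm_num : (0:ℝ) ≤ 2)]
  -- chain rule
  have hvder : ∀ x : ℝ, HasDerivAt (fun z => 1 - Q (sigma z))
      (-(deriv Q (sigma x) * ((1 - sigma x ^ 2) / Real.sqrt 2))) x := by
    intro x
    have h := (hQat _ (sigma_mem_Ioo x)).comp x (hasDerivAt_sigma x)
    have h2 := (hasDerivAt_const x (1:ℝ)).sub h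
    rw [zero_sub] at h2
    exact h2
  -- key finite-T identity
  have key : ∀ T : ℝ, (∫ z in (0:ℝ)..T, g z)
      = T ^ 2 / 2 * (1 - Q (sigma T)) + ∫ u in (0:ℝ)..(sigma T), G u := by
    intro T
    have hu : ∀ x ∈ Set.uIcc (0:ℝ) T, HasDerivAt (fun z : ℝ => z ^ 2 / 2) x x := by
      intro x _
      have := (hasDerivAt_pow 2 x).div_const 2
      simpa using this
    have hv : ∀ x ∈ Set.uIcc (0:ℝ) T, HasDerivAt (fun z => 1 - Q (sigma z))
        (-(deriv Q (sigma x) * ((1 - sigma x ^ 2) / Real.sqrt 2))) x := fun x _ => hvder x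
    have hu' : IntervalIntegrable (fun x : ℝ => x) volume 0 T :=
      continuous_id.intervalIntegrable _ _
    have hv' : IntervalIntegrable
        (fun x => -(deriv Q (sigma x) * ((1 - sigma x ^ 2) / Real.sqrt 2))) volume 0 T :=
      ((hQ'σ.mul hσ'cont).neg).intervalIntegrable _ _
    have ibp := intervalIntegral.integral_mul_deriv_eq_deriv_mul hu hv hu' hv'
    -- substitution
    have hsub := intervalIntegral.integral_comp_smul_deriv'
      (f := sigma) (f' := fun x => (1 - sigma x ^ 2) / Real.sqrt 2) (g := G)
      (a := 0) (b := T)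
      (fun x _ => hasDerivAt_sigma x) hσ'cont.continuousOn
      (hGcont.mono (by rintro y ⟨z, _, rfl⟩; exact sigma_mem_Ioo z))
    rw [sigma_zero] at hsub
    have hsub' : (∫ x in (0:ℝ)..T, x ^ 2 / 2 * (deriv Q (sigma x) * ((1 - sigma x ^ 2) / Real.sqrt 2)))
        = ∫ u in (0:ℝ)..(sigma T), G u := by
      rw [← hsub]
      apply intervalIntegral.integral_congr
      intro x _
      simp only [smul_eq_mul, Function.comp_apply, hG, harc2 x]
      ring
    have hneg : (∫ x in (0:ℝ)..T, x ^ 2 / 2 * -(deriv Q (sigma x) * ((1 - sigma x ^ 2) / Real.sqrt 2)))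
        = -∫ x in (0:ℝ)..T, x ^ 2 / 2 * (deriv Q (sigma x) * ((1 - sigma x ^ 2) / Real.sqrt 2)) := by
      rw [← intervalIntegral.integral_neg]
      apply intervalIntegral.integral_congr
      intro x _
      ring
    rw [hneg, hsub'] at ibp
    have : (∫ z in (0:ℝ)..T, g z) = ∫ x in (0:ℝ)..T, x * (1 - Q (sigma x)) := rfl
    rw [this]
    linarith [ibp]
  -- exponential decay constant
  have hA : (0:ℝ) < Real.sqrt 2 - 1 := by
    nlinarith [Real.sq_sqrt (by norm_num : (0:ℝ) ≤ 2), Real.sqrt_nonneg 2]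
  set A : ℝ := Real.sqrt 2 - 1 with hAdef
  have hexp : ∀ x : ℝ, Real.exp (-(Real.sqrt 2 * x)) * Real.exp (A * x) = Real.exp (-x) := by
    intro x
    rw [← Real.exp_add]
    congr 1
    rw [hAdef]
    ring
  -- pointwise bound for the change-of-variables integrand
  have hbound : ∀ x ∈ Set.Ioi (0:ℝ),
      ‖|(1 - sigma x ^ 2) / Real.sqrt 2| • G (sigma x)‖ ≤ (8 * M / A ^ 2) * Real.exp (-x) := by
    intro x hx
    have hx0 : (0:ℝ) < x := hx
    have hs := sigma_mem_Ioo x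
    have hσ'0 : (0:ℝ) ≤ (1 - sigma x ^ 2) / Real.sqrt 2 := by
      apply div_nonneg _ sqrt2_pos.le
      nlinarith [hs.1, hs.2]
    have h2 : (1 - sigma x ^ 2) / Real.sqrt 2 ≤ 4 * Real.exp (-(Real.sqrt 2 * x)) := by
      have e1 : 1 - sigma x ^ 2 ≤ 2 * (1 - sigma x) := by nlinarith [hs.1, hs.2]
      have e2 : 1 - sigma x ≤ 2 * Real.exp (-(Real.sqrt 2 * x)) := one_sub_sigma_le
      have e3 : (1 - sigma x ^ 2) / Real.sqrt 2 ≤ 1 - sigma x ^ 2 := by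
        apply div_le_self _ (by nlinarith [Real.sq_sqrt (by norm_num : (0:ℝ) ≤ 2), Real.sqrt_nonneg 2])
        nlinarith [hs.1, hs.2]
      linarith
    have hx2 : x ^ 2 ≤ 4 / A ^ 2 * Real.exp (A * x) := by
      have w : A * x / 2 ≤ Real.exp (A * x / 2) := by
        linarith [Real.add_one_le_exp (A * x / 2), Real.exp_pos (A * x / 2)]
      have hx' : x ≤ 2 / A * Real.exp (A * x / 2) := by
        rw [div_mul_eq_mul_div, le_div_iff₀ hA]
        nlinarith [w]
      have hsq := mul_self_le_mul_self hx0.le hx'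
      have heq : (2 / A * Real.exp (A * x / 2)) * (2 / A * Real.exp (A * x / 2))
          = 4 / A ^ 2 * Real.exp (A * x) := by
        rw [mul_mul_mul_comm, ← Real.exp_add, show A * x / 2 + A * x / 2 = A * x by ring]
        field_simp
        ring
      nlinarith [hsq, heq]
    have hnorm : ‖|(1 - sigma x ^ 2) / Real.sqrt 2| • G (sigma x)‖
        = ((1 - sigma x ^ 2) / Real.sqrt 2) * (|deriv Q (sigma x)| * (x ^ 2 / 2)) := by
      rw [smul_eq_mul, Real.norm_eq_abs, abs_mul, abs_abs, abs_of_nonneg hσ'0, hG]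
      simp only
      rw [abs_mul, harc2, abs_of_nonneg (by positivity : (0:ℝ) ≤ x ^ 2 / 2)]
    rw [hnorm]
    have step1 : |deriv Q (sigma x)| * (x ^ 2 / 2) ≤ M * (x ^ 2 / 2) :=
      mul_le_mul_of_nonneg_right (hMQ _ hs) (by positivity)
    calc ((1 - sigma x ^ 2) / Real.sqrt 2) * (|deriv Q (sigma x)| * (x ^ 2 / 2))
        ≤ (4 * Real.exp (-(Real.sqrt 2 * x))) * (|deriv Q (sigma x)| * (x ^ 2 / 2)) :=
          mul_le_mul_of_nonneg_right h2 (by positivity)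
      _ ≤ (4 * Real.exp (-(Real.sqrt 2 * x))) * (M * (x ^ 2 / 2)) :=
          mul_le_mul_of_nonneg_left step1 (by positivity)
      _ ≤ (4 * Real.exp (-(Real.sqrt 2 * x))) * (M * ((4 / A ^ 2 * Real.exp (A * x)) / 2)) := by
          apply mul_le_mul_of_nonneg_left _ (by positivity)
          apply mul_le_mul_of_nonneg_left _ hM0
          linarith
      _ = (8 * M / A ^ 2) * (Real.exp (-(Real.sqrt 2 * x)) * Real.exp (A * x)) := by ring
      _ = (8 * M / A ^ 2) * Real.exp (-x) := by rw [hexp]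
  -- integrability of G on (0,1)
  have hGint : IntegrableOn G (Set.Ioo (0:ℝ) 1) := by
    rw [← sigma_image_Ioi, integrableOn_image_iff_integrableOn_abs_deriv_smul measurableSet_Ioi
      (fun x _ => (hasDerivAt_sigma x).hasDerivWithinAt) sigma_strictMono.injective.injOn G]
    have hcont : Continuous fun x => |(1 - sigma x ^ 2) / Real.sqrt 2| • G (sigma x) := by
      have heq : (fun x => |(1 - sigma x ^ 2) / Real.sqrt 2| • G (sigma x))
          = fun x => |(1 - sigma x ^ 2) / Real.sqrt 2| * (deriv Q (sigma x) * (x ^ 2 / 2)) := by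
        funext x
        rw [smul_eq_mul, hG]
        simp only
        rw [harc2]
      rw [heq]
      exact hσ'cont.abs.mul (hQ'σ.mul ((continuous_pow 2).div_const 2))
    apply Integrable.mono' (g := fun x => (8 * M / A ^ 2) * Real.exp (-x))
    · have : IntegrableOn (fun x : ℝ => Real.exp (-1 * x)) (Set.Ioi 0) :=
        exp_neg_integrableOn_Ioi 0 one_pos
      have := this.const_mul (8 * M / A ^ 2)
      exact IntegrableOn.congr_fun this (fun x _ => by norm_num) measurableSet_Ioi
    · exact hcont.aestronglyMeasurable.restrict
    · rw [ae_restrict_iff' measurableSet_Ioi]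
      exact Filter.Eventually.of_forall hbound
  -- sigma tends to 1 at infinity
  have hσ1 : Tendsto sigma atTop (𝓝 1) := by
    have h1 : Tendsto (fun T : ℝ => Real.sqrt 2 * T) atTop atTop :=
      Tendsto.const_mul_atTop sqrt2_pos tendsto_id
    have h2 : Tendsto (fun T : ℝ => Real.exp (-(Real.sqrt 2 * T))) atTop (𝓝 0) :=
      Real.tendsto_exp_atBot.comp (tendsto_neg_atTop_atBot.comp h1)
    have hlo : Tendsto (fun T : ℝ => 1 - 2 * Real.exp (-(Real.sqrt 2 * T))) atTop (𝓝 1) := by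
      simpa using tendsto_const_nhds.sub (h2.const_mul 2)
    apply tendsto_of_tendsto_of_tendsto_of_le_of_le hlo tendsto_const_nhds
    · intro T
      show 1 - 2 * Real.exp (-(Real.sqrt 2 * T)) ≤ sigma T
      linarith [one_sub_sigma_le (z := T)]
    · intro T
      exact (sigma_mem_Ioo T).2.le
  -- boundary term tends to zero
  have hbdry : Tendsto (fun T : ℝ => T ^ 2 / 2 * (1 - Q (sigma T))) atTop (𝓝 0) := by
    have h1 : Tendsto (fun T : ℝ => Real.sqrt 2 * T) atTop atTop :=
      Tendsto.const_mul_atTop sqrt2_pos tendsto_id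
    have hgb : Tendsto (fun T : ℝ =>
        (M / 2) * ((Real.sqrt 2 * T) ^ 2 * Real.exp (-(Real.sqrt 2 * T)))) atTop (𝓝 0) := by
      have := (Real.tendsto_pow_mul_exp_neg_atTop_nhds_zero 2).comp h1
      simpa using this.const_mul (M / 2)
    apply squeeze_zero_norm' _ hgb
    filter_upwards [eventually_ge_atTop (0:ℝ)] with T hT
    have hs := sigma_mem_Ioo T
    have hlip := hLip (sigma T) (Set.Ioo_subset_Icc_self hs)
    have h1σ : |1 - sigma T| = 1 - sigma T := abs_of_nonneg (by linarith [hs.2])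
    have hd : |1 - Q (sigma T)| ≤ M * (1 - sigma T) := by
      have h01 : (1:ℝ) - Q (sigma T) = Q 1 - Q (sigma T) := by rw [hQ1]
      rw [h01]
      rw [h1σ] at hlip
      exact hlip
    have hee : 1 - sigma T ≤ 2 * Real.exp (-(Real.sqrt 2 * T)) := one_sub_sigma_le
    have hsq2 : (Real.sqrt 2 * T) ^ 2 = 2 * T ^ 2 := by
      rw [mul_pow, Real.sq_sqrt (by norm_num : (0:ℝ) ≤ 2)]
    rw [Real.norm_eq_abs, abs_mul, abs_of_nonneg (by positivity : (0:ℝ) ≤ T ^ 2 / 2), hsq2]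
    have hM1 : |1 - Q (sigma T)| ≤ 2 * M * Real.exp (-(Real.sqrt 2 * T)) := by
      nlinarith [hd, hee, hM0]
    nlinarith [mul_le_mul_of_nonneg_left hM1 (show (0:ℝ) ≤ T ^ 2 / 2 by positivity)]
  -- primitive of G is continuous
  have hGint1 : IntegrableOn G (Set.uIcc 0 1) := by
    rw [Set.uIcc_of_le zero_le_one, integrableOn_Icc_iff_integrableOn_Ioo]
    exact hGint
  have hprim : ContinuousOn (fun b => ∫ u in (0:ℝ)..b, G u) (Set.uIcc 0 1) :=
    intervalIntegral.continuousOn_primitive_interval hGint1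
  have hσin : Tendsto sigma atTop (𝓝[Set.uIcc (0:ℝ) 1] 1) := by
    rw [tendsto_nhdsWithin_iff]
    refine ⟨hσ1, ?_⟩
    filter_upwards [eventually_ge_atTop (0:ℝ)] with T hT
    rw [Set.uIcc_of_le zero_le_one]
    refine ⟨?_, (sigma_mem_Ioo T).2.le⟩
    have := sigma_strictMono.monotone hT
    rwa [sigma_zero] at this
  have hlim2 : Tendsto (fun T => ∫ u in (0:ℝ)..(sigma T), G u) atTop
      (𝓝 (∫ u in (0:ℝ)..1, G u)) := by
    have h1mem : (1:ℝ) ∈ Set.uIcc (0:ℝ) 1 := by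
      rw [Set.uIcc_of_le zero_le_one]; norm_num
    exact ((hprim 1 h1mem).tendsto).comp hσin
  have hlim1 : Tendsto (fun T => ∫ z in (0:ℝ)..T, g z) atTop
      (𝓝 (∫ z in Set.Ioi 0, g z)) :=
    intervalIntegral_tendsto_integral_Ioi 0 hint tendsto_id
  have hmain : (∫ z in Set.Ioi 0, g z) = ∫ u in (0:ℝ)..1, G u := by
    have hadd := hbdry.add hlim2
    rw [zero_add] at hadd
    exact tendsto_nhds_unique hlim1 (hadd.congr (fun T => (key T).symm))
  -- final assembly by evenness
  have hfeq_pos : ∀ z ∈ Set.Ioi (0:ℝ), f z = -g z := by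
    intro z hz
    rw [hf, hg]
    simp only
    rw [Set.indicator_of_mem hz]
    ring
  have hfeq_neg : ∀ z ∈ Set.Iic (0:ℝ), f z = -g (-z) := by
    intro z hz
    rw [hf, hg]
    simp only
    rw [Set.indicator_of_notMem (by simpa using hz : z ∉ Set.Ioi (0:ℝ))]
    rw [sigma_neg, hodd]
    ring
  have hintf_pos : IntegrableOn f (Set.Ioi 0) :=
    IntegrableOn.congr_fun hint.neg (fun z hz => (hfeq_pos z hz).symm) measurableSet_Ioi
  have hintneg : IntegrableOn (fun z => -g (-z)) (Set.Iic 0) := by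
    have h1 : IntegrableOn ((fun z => -g z) ∘ Neg.neg) (Neg.neg ⁻¹' Set.Ioi (0:ℝ)) :=
      (MeasurePreserving.integrableOn_comp_preimage (Measure.measurePreserving_neg _)
        (Homeomorph.neg ℝ).measurableEmbedding).2 hint.neg
    have h2 : (Neg.neg ⁻¹' Set.Ioi (0:ℝ) : Set ℝ) = Set.Iio 0 := by
      ext x; simp
    rw [h2] at h1
    rw [integrableOn_Iic_iff_integrableOn_Iio]
    exact h1
  have hintf_neg : IntegrableOn f (Set.Iic 0) :=
    IntegrableOn.congr_fun hintneg (fun z hz => (hfeq_neg z hz).symm) measurableSet_Iic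
  have hfe : ∀ z : ℝ, f (-z) = f z := by
    intro z
    rcases lt_trichotomy z 0 with h | h | h
    · rw [hfeq_pos (-z) (by simpa using h), hfeq_neg z h.le]
    · rw [h, neg_zero]
    · rw [hfeq_neg (-z) (by simpa using h.le), hfeq_pos z h, neg_neg]
  have hsplit : (∫ z : ℝ, f z) = (∫ z in Set.Iic 0, f z) + ∫ z in Set.Ioi 0, f z :=
    (integral_Iic_add_Ioi hintf_neg hintf_pos).symm
  have hIic : (∫ z in Set.Iic (0:ℝ), f z) = ∫ z in Set.Ioi (0:ℝ), f z := by
    have h := integral_comp_neg_Ioi (0:ℝ) f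
    rw [neg_zero] at h
    rw [← h]
    exact setIntegral_congr_fun measurableSet_Ioi (fun z _ => hfe z)
  have hIoi : (∫ z in Set.Ioi (0:ℝ), f z) = -∫ z in Set.Ioi (0:ℝ), g z := by
    rw [setIntegral_congr_fun measurableSet_Ioi (fun z hz => hfeq_pos z hz), MeasureTheory.integral_neg]
  calc (∫ z : ℝ, f z) = (∫ z in Set.Iic 0, f z) + ∫ z in Set.Ioi 0, f z := hsplit
    _ = (-∫ z in Set.Ioi 0, g z) + -∫ z in Set.Ioi 0, g z := by rw [hIic, hIoi]
    _ = -2 * ∫ u in (0:ℝ)..1, G u := by rw [hmain]; ring
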